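/- There exists a constant C > 0 such that for every real T ≥ 2, ∫_0^1 (a_1(x)a_2(x) · 1_{{a_1(x)a_2(x) ≤ T}}) · (a_2(x)a_3(x) · 1_{{a_2(x)a_3(x) ≤ T}}) dμ(x) ≤ C · T, where μ is the Gauss measure. (Correlation bound for adjacent truncated products of consecutive partial quotients.) -/

import Mathlib

open MeasureTheory Filter Real Set
open scoped ENNReal NNReal

/-- The Gauss map `T(x) = 1/x - ⌊1/x⌋`, with `T(0) = 0`. -/
noncomputable def gaussMap (x : ℝ) : ℝ := if x = 0 then 0 else 1 / x - ⌊1 / x⌋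

/-- The `n`-th partial quotient `a_n(x) = ⌊1 / T^{n-1}(x)⌋` (for `n ≥ 1`). -/
noncomputable def pq (n : ℕ) (x : ℝ) : ℕ := ⌊1 / (gaussMap^[n - 1] x)⌋₊

/-- `S_n(x) = ∑_{i=1}^n a_i(x) a_{i+1}(x)`. -/
noncomputable def S (n : ℕ) (x : ℝ) : ℕ := ∑ i ∈ Finset.Icc 1 n, pq i x * pq (i + 1) x

/-- The Gauss measure `μ(A) = (1/log 2) ∫_A dx/(1+x)` on `(0,1)`. -/
noncomputable def gaussMeasure : Measure ℝ :=
  (volume.restrict (Set.Ioo (0:ℝ) 1)).withDensity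
    (fun x => ENNReal.ofReal (1 / (Real.log 2 * (1 + x))))

/-! ### Auxiliary lemmas -/

lemma corr_measurable_gaussMap : Measurable gaussMap := by
  unfold gaussMap
  refine Measurable.ite (measurableSet_singleton 0) measurable_const ?_
  have h1 : Measurable fun x : ℝ => 1 / x := measurable_const.div measurable_id
  have h2 : Measurable fun x : ℝ => (⌊1/x⌋ : ℝ) :=
    (measurable_from_top (α := ℤ)).comp (Int.measurable_floor.comp h1)
  exact h1.sub h2

lemma corr_measurable_pq (n : ℕ) : Measurable fun x => pq n x := by
  unfold pq
  exact Nat.measurable_floor.comp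
    (measurable_const.div (corr_measurable_gaussMap.iterate (n-1)))

lemma corr_lip_image (K : NNReal) (f : ℝ → ℝ) (s : Set ℝ) (h : LipschitzOnWith K f s) :
    volume (f '' s) ≤ K * volume s := by
  have h2 := h.hausdorffMeasure_image_le (zero_le_one (α := ℝ))
  rw [MeasureTheory.hausdorffMeasure_real, ENNReal.rpow_one] at h2
  exact h2

lemma corr_step (b : ℕ) (hb : 1 ≤ b) (A : Set ℝ) :
    volume ({y | pq 1 y = b ∧ gaussMap y ∈ A} ∩ Ico 0 1)
      ≤ ((b : ℝ≥0∞)) ⁻¹ ^ 2 * volume (A ∩ Ico 0 1) := by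
  have hbR : (1:ℝ) ≤ (b:ℝ) := by exact_mod_cast hb
  set φ : ℝ → ℝ := fun y => ((b:ℝ) + y)⁻¹ with hφ
  have hsub : {y | pq 1 y = b ∧ gaussMap y ∈ A} ∩ Ico 0 1 ⊆ φ '' (A ∩ Ico 0 1) := by
    rintro y ⟨⟨hpq, hA⟩, hy0, hy1⟩
    have hyne : y ≠ 0 := by
      rintro rfl
      simp [pq, Function.iterate_zero] at hpq
      omega
    have hypos : 0 < y := lt_of_le_of_ne hy0 (Ne.symm hyne)
    have hinv : 0 < 1 / y := by positivity
    have hfl : ⌊1 / y⌋₊ = b := by simpa [pq] using hpq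
    have hbly : (b:ℝ) ≤ 1 / y := by
      have := Nat.floor_le hinv.le
      rw [hfl] at this; exact this
    have hylt : 1 / y < (b:ℝ) + 1 := by
      have := Nat.lt_floor_add_one (1 / y)
      rw [hfl] at this; exact_mod_cast this
    have hifl : (⌊1 / y⌋ : ℝ) = (b : ℝ) := by
      have : ⌊1 / y⌋ = (b : ℤ) := by
        rw [Int.floor_eq_iff]
        constructor
        · exact_mod_cast hbly
        · push_cast; exact hylt
      rw [this]; push_cast; ring
    have hg : gaussMap y = 1 / y - (b:ℝ) := by
      rw [gaussMap, if_neg hyne, hifl]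
    refine ⟨gaussMap y, ⟨hA, ?_, ?_⟩, ?_⟩
    · rw [hg]; linarith
    · rw [hg]; linarith
    · rw [hφ]; simp only [hg]
      have h9 : (b:ℝ) + (1 / y - (b:ℝ)) = 1 / y := by ring
      rw [h9, one_div, inv_inv]
  refine le_trans (measure_mono hsub) ?_
  set K : ℝ≥0 := ((b:ℝ≥0) ^ 2)⁻¹ with hK
  have hKcoe : (K : ℝ) = (((b:ℝ)) ^ 2)⁻¹ := by rw [hK]; push_cast; ring
  have hlip : LipschitzOnWith K φ (A ∩ Ico 0 1) := by
    rw [lipschitzOnWith_iff_dist_le_mul]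
    rintro x ⟨-, hx0, -⟩ y ⟨-, hy0, -⟩
    have hxp : (0:ℝ) < (b:ℝ) + x := by linarith
    have hyp : (0:ℝ) < (b:ℝ) + y := by linarith
    rw [Real.dist_eq, Real.dist_eq, hKcoe]
    have heq : φ x - φ y = (y - x) / (((b:ℝ) + x) * ((b:ℝ) + y)) := by
      rw [hφ]; field_simp; ring
    rw [heq, abs_div]
    rw [abs_of_pos (show (0:ℝ) < ((b:ℝ) + x) * ((b:ℝ) + y) by positivity)]
    rw [abs_sub_comm y x]
    rw [div_le_iff₀ (by positivity)]
    have h1 : (b:ℝ) ^ 2 ≤ ((b:ℝ) + x) * ((b:ℝ) + y) := by nlinarith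
    calc |x - y| = (((b:ℝ)^2)⁻¹ * |x-y|) * ((b:ℝ)^2) := by
          field_simp
      _ ≤ (((b:ℝ)^2)⁻¹ * |x-y|) * (((b:ℝ)+x)*((b:ℝ)+y)) := by
          apply mul_le_mul_of_nonneg_left h1 (by positivity)
  refine le_trans (corr_lip_image _ _ _ hlip) ?_
  gcongr
  have hbne : ((b:ℝ≥0) ^ 2) ≠ 0 := by positivity
  rw [hK, ENNReal.coe_inv hbne]
  push_cast
  rw [ENNReal.inv_pow]

lemma corr_base (c : ℕ) (hc : 1 ≤ c) :
    volume ({y | pq 1 y = c} ∩ Ico 0 1) ≤ ((c : ℝ≥0∞))⁻¹ ^ 2 := by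
  have hcR : (1:ℝ) ≤ (c:ℝ) := by exact_mod_cast hc
  have hcp : (0:ℝ) < (c:ℝ) := by linarith
  have hsub : {y | pq 1 y = c} ∩ Ico 0 1 ⊆ Ioc (1/((c:ℝ)+1)) (1/(c:ℝ)) := by
    rintro y ⟨hpq, hy0, hy1⟩
    have hyne : y ≠ 0 := by
      rintro rfl
      simp [pq, Function.iterate_zero] at hpq
      omega
    have hypos : 0 < y := lt_of_le_of_ne hy0 (Ne.symm hyne)
    have hinv : 0 < 1 / y := by positivity
    have hfl : ⌊1 / y⌋₊ = c := by simpa [pq] using hpq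
    have hbly : (c:ℝ) ≤ 1 / y := by
      have := Nat.floor_le hinv.le
      rw [hfl] at this; exact this
    have hylt : 1 / y < (c:ℝ) + 1 := by
      have := Nat.lt_floor_add_one (1 / y)
      rw [hfl] at this; exact_mod_cast this
    constructor
    · rw [div_lt_iff₀ (by positivity)] at *
      nlinarith
    · rw [le_div_iff₀ hypos] at hbly
      rw [le_div_iff₀ hcp]
      linarith
  refine le_trans (measure_mono hsub) ?_
  rw [Real.volume_Ioc]
  have h1 : 1/(c:ℝ) - 1/((c:ℝ)+1) ≤ (((c:ℝ))^2)⁻¹ := by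
    rw [div_sub_div _ _ (by positivity) (by positivity)]
    rw [div_le_iff₀ (by positivity)]
    have : ((c:ℝ)^2)⁻¹ * ((c:ℝ) * ((c:ℝ)+1)) = ((c:ℝ)+1)/(c:ℝ) := by
      field_simp
    rw [this]
    rw [le_div_iff₀ hcp]
    nlinarith
  refine le_trans (ENNReal.ofReal_le_ofReal h1) ?_
  rw [ENNReal.ofReal_inv_of_pos (by positivity), ENNReal.ofReal_pow hcp.le]
  rw [ENNReal.inv_pow, ENNReal.ofReal_natCast]

lemma corr_pq_succ (n : ℕ) (hn : 1 ≤ n) (x : ℝ) : pq (n+1) x = pq n (gaussMap x) := by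
  unfold pq
  congr 2
  have h1 : (n + 1) - 1 = (n - 1) + 1 := by omega
  rw [h1, Function.iterate_succ_apply]

lemma corr_cyl (a b c : ℕ) (ha : 1 ≤ a) (hb : 1 ≤ b) (hc : 1 ≤ c) :
    volume ({x | pq 1 x = a ∧ pq 2 x = b ∧ pq 3 x = c} ∩ Ioo 0 1)
      ≤ ((a : ℝ≥0∞))⁻¹ ^ 2 * ((b : ℝ≥0∞))⁻¹ ^ 2 * ((c : ℝ≥0∞))⁻¹ ^ 2 := by
  have hset : {x : ℝ | pq 1 x = a ∧ pq 2 x = b ∧ pq 3 x = c}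
      = {x | pq 1 x = a ∧ gaussMap x ∈ {y | pq 1 y = b ∧ pq 2 y = c}} := by
    ext x
    simp only [mem_setOf_eq, corr_pq_succ 1 le_rfl, corr_pq_succ 2 (by norm_num)]
  have h1 : volume ({x | pq 1 x = a ∧ pq 2 x = b ∧ pq 3 x = c} ∩ Ioo 0 1)
      ≤ volume ({x | pq 1 x = a ∧ gaussMap x ∈ {y | pq 1 y = b ∧ pq 2 y = c}} ∩ Ico 0 1) := by
    rw [hset]; exact measure_mono (inter_subset_inter_right _ Ioo_subset_Ico_self)
  refine h1.trans ?_
  refine le_trans (corr_step a ha _) ?_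
  rw [mul_assoc]
  gcongr
  have hset2 : {y : ℝ | pq 1 y = b ∧ pq 2 y = c}
      = {y | pq 1 y = b ∧ gaussMap y ∈ {z | pq 1 z = c}} := by
    ext y
    simp only [mem_setOf_eq, corr_pq_succ 1 le_rfl]
  rw [hset2]
  refine le_trans (corr_step b hb _) ?_
  gcongr
  exact corr_base c hc

lemma corr_sum_rpow_le (α : ℝ) (h0 : 0 < α) (h1 : α ≤ 1) (N : ℕ) :
    ∑ a ∈ Finset.Icc 1 N, ((a:ℝ)) ^ (α - 1) ≤ α⁻¹ * (N:ℝ) ^ α := by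
  induction N with
  | zero => simp [Real.zero_rpow h0.ne']
  | succ N ih =>
    rw [Finset.sum_Icc_succ_top (by omega : 1 ≤ N + 1)]
    set n : ℝ := (N:ℝ) with hn
    have hn0 : (0:ℝ) ≤ n := Nat.cast_nonneg N
    have hn1 : (0:ℝ) < n + 1 := by linarith
    have hcast : ((N+1:ℕ):ℝ) = n + 1 := by push_cast; ring
    have key : (n + 1) ^ (α - 1) ≤ α⁻¹ * ((n+1) ^ α - n ^ α) := by
      have hs : (-1:ℝ) ≤ -(1/(n+1)) := by
        rw [neg_le_neg_iff]
        rw [div_le_one hn1]; linarith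
      have hbern := rpow_one_add_le_one_add_mul_self hs h0.le h1
      have h2 : (1 + -(1/(n+1))) = n / (n+1) := by field_simp; ring
      rw [h2] at hbern
      have h3 : (n / (n+1)) ^ α = n ^ α / (n+1) ^ α := Real.div_rpow hn0 hn1.le α
      rw [h3] at hbern
      have hp : (0:ℝ) < (n+1) ^ α := rpow_pos_of_pos hn1 _
      rw [div_le_iff₀ hp] at hbern
      have h4 : (n+1) ^ (α - 1) = (n+1) ^ α / (n+1) := by
        rw [Real.rpow_sub hn1, Real.rpow_one]
      rw [h4]
      rw [div_le_iff₀ hn1, ← sub_nonneg]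
      have h5 : α⁻¹ * ((n+1)^α - n^α) * (n+1) - (n+1)^α
          = α⁻¹ * (n+1) * (((n+1)^α - n^α) - α * ((n+1)^α / (n+1))) := by
        field_simp
      rw [h5]
      have h6 : α * ((n+1)^α / (n+1)) ≤ (n+1)^α - n^α := by
        have h7 : (1 + α * -(1/(n+1))) * (n+1)^α = (n+1)^α - α * ((n+1)^α/(n+1)) := by
          field_simp; ring
        nlinarith
      have : (0:ℝ) < α⁻¹ * (n+1) := by positivity
      nlinarith
    rw [hcast]
    linarith

/-- Truncated value. -/
noncomputable def corrVal (T : ℝ) (n : ℕ) : ℝ := if (n:ℝ) ≤ T then (n:ℝ) else 0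

lemma corrVal_nonneg (T : ℝ) (n : ℕ) : 0 ≤ corrVal T n := by
  unfold corrVal; split_ifs
  · exact Nat.cast_nonneg n
  · exact le_rfl

lemma corrVal_le (T : ℝ) (n : ℕ) : corrVal T n ≤ (n:ℝ) := by
  unfold corrVal; split_ifs
  · exact le_rfl
  · exact Nat.cast_nonneg n

lemma corrVal_zero (T : ℝ) : corrVal T 0 = 0 := by
  unfold corrVal; split_ifs <;> simp

lemma corrVal_eq_zero_of_gt {T : ℝ} {n : ℕ} (h : T < (n:ℝ)) : corrVal T n = 0 := by
  unfold corrVal; rw [if_neg (not_le.mpr h)]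

lemma corrVal_ne_zero {T : ℝ} {n : ℕ} (h : corrVal T n ≠ 0) : 1 ≤ n := by
  by_contra hn
  push_neg at hn
  interval_cases n
  exact h (corrVal_zero T)

/-- One factor of the summable majorant. -/
noncomputable def corrF1 (T : ℝ) (a b : ℕ) : ℝ≥0∞ :=
  ENNReal.ofReal (corrVal T (a*b)) * ((a:ℝ≥0∞))⁻¹ ^ 2 * ((b:ℝ≥0∞))⁻¹

lemma corrF1_zero_left (T : ℝ) (b : ℕ) : corrF1 T 0 b = 0 := by
  unfold corrF1
  simp [corrVal_zero]

lemma corr_inner_sum (T : ℝ) (hT : 0 ≤ T) (b : ℕ) (hb : 1 ≤ b) :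
    ∑' a : ℕ, corrF1 T a b ≤ ENNReal.ofReal (4 * (T / b) ^ ((4:ℝ)⁻¹)) := by
  have hbR : (1:ℝ) ≤ (b:ℝ) := by exact_mod_cast hb
  have hTb : (0:ℝ) ≤ T / b := by positivity
  set Nb : ℕ := ⌊T / b⌋₊ with hNb
  have hvanish : ∀ a ∉ Finset.Icc 1 Nb, corrF1 T a b = 0 := by
    intro a ha
    rw [Finset.mem_Icc, not_and_or] at ha
    rcases ha with ha | ha
    · push_neg at ha
      interval_cases a
      exact corrF1_zero_left T b
    · push_neg at ha
      have h1 : (Nb : ℝ) < (a:ℝ) := by exact_mod_cast ha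
      have h2 : T / b < (a:ℝ) := by
        rcases lt_or_ge (T / b) (a:ℝ) with h | h
        · exact h
        · exfalso
          have := Nat.le_floor h
          omega
      have h3 : T < ((a * b : ℕ) : ℝ) := by
        push_cast
        rw [div_lt_iff₀ (by positivity)] at h2
        linarith [h2]
      unfold corrF1
      rw [corrVal_eq_zero_of_gt h3]
      simp
  rw [tsum_eq_sum hvanish]
  have hterm : ∀ a ∈ Finset.Icc 1 Nb, corrF1 T a b ≤ ENNReal.ofReal ((a:ℝ)⁻¹) := by
    intro a ha
    rw [Finset.mem_Icc] at ha
    have ha1 : 1 ≤ a := ha.1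
    have ha0 : ((a:ℝ≥0∞)) ≠ 0 := by exact_mod_cast Nat.one_le_iff_ne_zero.mp ha1
    have hat : ((a:ℝ≥0∞)) ≠ ⊤ := ENNReal.natCast_ne_top a
    have hb0 : ((b:ℝ≥0∞)) ≠ 0 := by exact_mod_cast Nat.one_le_iff_ne_zero.mp hb
    have hbt : ((b:ℝ≥0∞)) ≠ ⊤ := ENNReal.natCast_ne_top b
    have h1 : ENNReal.ofReal (corrVal T (a*b)) ≤ ((a:ℝ≥0∞)) * ((b:ℝ≥0∞)) := by
      refine le_trans (ENNReal.ofReal_le_ofReal (corrVal_le T (a*b))) ?_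
      rw [ENNReal.ofReal_natCast]
      push_cast
      exact le_rfl
    have h2 : corrF1 T a b ≤ ((a:ℝ≥0∞)) * ((b:ℝ≥0∞)) * ((a:ℝ≥0∞))⁻¹ ^ 2 * ((b:ℝ≥0∞))⁻¹ := by
      unfold corrF1
      exact mul_le_mul_left (mul_le_mul_left h1 _) _
    refine h2.trans ?_
    have h3 : ((a:ℝ≥0∞)) * ((b:ℝ≥0∞)) * ((a:ℝ≥0∞))⁻¹ ^ 2 * ((b:ℝ≥0∞))⁻¹
        = (((a:ℝ≥0∞)) * ((a:ℝ≥0∞))⁻¹) * (((b:ℝ≥0∞)) * ((b:ℝ≥0∞))⁻¹) * ((a:ℝ≥0∞))⁻¹ := by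
      ring
    rw [h3, ENNReal.mul_inv_cancel ha0 hat, ENNReal.mul_inv_cancel hb0 hbt,
      one_mul, one_mul]
    rw [ENNReal.ofReal_inv_of_pos (show (0:ℝ) < (a:ℝ) by exact_mod_cast ha1),
      ENNReal.ofReal_natCast]
  refine le_trans (Finset.sum_le_sum hterm) ?_
  rw [← ENNReal.ofReal_sum_of_nonneg (fun a _ => by positivity)]
  apply ENNReal.ofReal_le_ofReal
  have hstep : ∀ a ∈ Finset.Icc 1 Nb, (a:ℝ)⁻¹ ≤ (a:ℝ) ^ ((4:ℝ)⁻¹ - 1) := by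
    intro a ha
    rw [Finset.mem_Icc] at ha
    have ha1 : (1:ℝ) ≤ (a:ℝ) := by exact_mod_cast ha.1
    calc (a:ℝ)⁻¹ = (a:ℝ) ^ (-1:ℝ) := by rw [Real.rpow_neg_one]
      _ ≤ (a:ℝ) ^ ((4:ℝ)⁻¹ - 1) := by
          apply Real.rpow_le_rpow_of_exponent_le ha1
          norm_num
  refine le_trans (Finset.sum_le_sum hstep) ?_
  refine le_trans (corr_sum_rpow_le (4⁻¹) (by norm_num) (by norm_num) Nb) ?_
  have h4 : ((4:ℝ)⁻¹)⁻¹ = (4:ℝ) := by norm_num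
  rw [h4]
  have h5 : ((Nb:ℝ)) ^ ((4:ℝ)⁻¹) ≤ (T/b) ^ ((4:ℝ)⁻¹) :=
    Real.rpow_le_rpow (Nat.cast_nonneg Nb) (Nat.floor_le hTb) (by norm_num)
  linarith

/-- Key bound for the outer sum over triples. -/
lemma corr_outer (T : ℝ) (hT : 2 ≤ T) :
    ∑' p : ℕ × ℕ × ℕ, corrF1 T p.2.1 p.1 * corrF1 T p.2.2 p.1
      ≤ ENNReal.ofReal (32 * T) := by
  have hT0 : (0:ℝ) < T := by linarith
  rw [ENNReal.tsum_prod']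
  have hfac : ∀ b : ℕ, ∑' q : ℕ × ℕ, corrF1 T q.1 b * corrF1 T q.2 b
      = (∑' a : ℕ, corrF1 T a b) * (∑' c : ℕ, corrF1 T c b) := by
    intro b
    rw [ENNReal.tsum_prod']
    calc ∑' a, ∑' c, corrF1 T a b * corrF1 T c b
        = ∑' a, corrF1 T a b * ∑' c, corrF1 T c b := by
          congr 1; ext a; exact ENNReal.tsum_mul_left
      _ = (∑' a, corrF1 T a b) * (∑' c, corrF1 T c b) := ENNReal.tsum_mul_right
  simp only [hfac]
  set M : ℕ := ⌊T⌋₊ with hM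
  have hvanish : ∀ b ∉ Finset.Icc 1 M,
      (∑' a : ℕ, corrF1 T a b) * (∑' c : ℕ, corrF1 T c b) = 0 := by
    intro b hbmem
    rw [Finset.mem_Icc, not_and_or] at hbmem
    have hz : ∀ a : ℕ, corrF1 T a b = 0 := by
      intro a
      rcases hbmem with hb | hb
      · push_neg at hb
        interval_cases b
        unfold corrF1
        simp [corrVal_zero]
      · push_neg at hb
        rcases Nat.eq_zero_or_pos a with rfl | ha
        · exact corrF1_zero_left T b
        · have h1 : T < (b:ℝ) := by
            rcases lt_or_ge T (b:ℝ) with h | h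
            · exact h
            · exfalso; have := Nat.le_floor h; omega
          have h2 : T < ((a*b : ℕ):ℝ) := by
            push_cast
            have hb1 : (1:ℝ) ≤ (b:ℝ) := by
              have : 1 ≤ b := by
                by_contra hc
                push_neg at hc
                interval_cases b
                · simp at h1; linarith
              exact_mod_cast this
            have ha1 : (1:ℝ) ≤ (a:ℝ) := by exact_mod_cast ha
            nlinarith
          unfold corrF1
          rw [corrVal_eq_zero_of_gt h2]
          simp
    simp [hz]
  rw [tsum_eq_sum hvanish]
  have hterm : ∀ b ∈ Finset.Icc 1 M,
      (∑' a : ℕ, corrF1 T a b) * (∑' c : ℕ, corrF1 T c b)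
        ≤ ENNReal.ofReal (16 * (T / b) ^ ((2:ℝ)⁻¹)) := by
    intro b hbmem
    rw [Finset.mem_Icc] at hbmem
    have hb1 := hbmem.1
    have hbR : (1:ℝ) ≤ (b:ℝ) := by exact_mod_cast hb1
    have hTb : (0:ℝ) < T / b := by positivity
    have h1 := corr_inner_sum T hT0.le b hb1
    refine le_trans (mul_le_mul' h1 h1) ?_
    rw [← ENNReal.ofReal_mul (by positivity)]
    apply ENNReal.ofReal_le_ofReal
    have h2 : (T/b) ^ ((4:ℝ)⁻¹) * (T/b) ^ ((4:ℝ)⁻¹) = (T/b) ^ ((2:ℝ)⁻¹) := by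
      rw [← Real.rpow_add hTb]
      norm_num
    have h3 : 4 * (T/b) ^ ((4:ℝ)⁻¹) * (4 * (T/b) ^ ((4:ℝ)⁻¹))
        = 16 * (T/b) ^ ((2:ℝ)⁻¹) := by rw [← h2]; ring
    rw [h3]
  refine le_trans (Finset.sum_le_sum hterm) ?_
  rw [← ENNReal.ofReal_sum_of_nonneg (fun b _ => by positivity)]
  apply ENNReal.ofReal_le_ofReal
  have hstep : ∀ b ∈ Finset.Icc 1 M,
      16 * (T / b) ^ ((2:ℝ)⁻¹) ≤ 16 * T ^ ((2:ℝ)⁻¹) * (b:ℝ) ^ ((2:ℝ)⁻¹ - 1) := by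
    intro b hbmem
    rw [Finset.mem_Icc] at hbmem
    have hbR : (1:ℝ) ≤ (b:ℝ) := by exact_mod_cast hbmem.1
    have hbpos : (0:ℝ) < (b:ℝ) := by linarith
    have h1 : (T / b) ^ ((2:ℝ)⁻¹) = T ^ ((2:ℝ)⁻¹) / (b:ℝ) ^ ((2:ℝ)⁻¹) :=
      Real.div_rpow hT0.le hbpos.le _
    have h2 : (b:ℝ) ^ ((2:ℝ)⁻¹ - 1) = ((b:ℝ) ^ ((2:ℝ)⁻¹))⁻¹ := by
      have : (2:ℝ)⁻¹ - 1 = -(2⁻¹) := by norm_num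
      rw [this, Real.rpow_neg hbpos.le]
    rw [h1, h2]
    rw [div_eq_mul_inv, mul_assoc]
  refine le_trans (Finset.sum_le_sum hstep) ?_
  rw [← Finset.mul_sum]
  have hsum := corr_sum_rpow_le (2⁻¹) (by norm_num) (by norm_num) M
  have h2inv : ((2:ℝ)⁻¹)⁻¹ = 2 := by norm_num
  rw [h2inv] at hsum
  have hMT : ((M:ℝ)) ^ ((2:ℝ)⁻¹) ≤ T ^ ((2:ℝ)⁻¹) := by
    apply Real.rpow_le_rpow (Nat.cast_nonneg M) (Nat.floor_le hT0.le) (by norm_num)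
  have hfin : 16 * T ^ ((2:ℝ)⁻¹) * (2 * T ^ ((2:ℝ)⁻¹)) ≤ 32 * T := by
    have : T ^ ((2:ℝ)⁻¹) * T ^ ((2:ℝ)⁻¹) = T := by
      rw [← Real.rpow_add hT0]
      norm_num
    nlinarith [this]
  calc 16 * T ^ ((2:ℝ)⁻¹) * ∑ b ∈ Finset.Icc 1 M, (b:ℝ) ^ ((2:ℝ)⁻¹ - 1)
      ≤ 16 * T ^ ((2:ℝ)⁻¹) * (2 * (M:ℝ) ^ ((2:ℝ)⁻¹)) := by
        apply mul_le_mul_of_nonneg_left hsum (by positivity)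
    _ ≤ 16 * T ^ ((2:ℝ)⁻¹) * (2 * T ^ ((2:ℝ)⁻¹)) := by
        apply mul_le_mul_of_nonneg_left (by linarith) (by positivity)
    _ ≤ 32 * T := hfin

theorem correlation_adjacent_truncated :
    ∃ C : ℝ, 0 < C ∧ ∀ T : ℝ, 2 ≤ T →
      (∫ x,
          (if ((pq 1 x * pq 2 x : ℕ) : ℝ) ≤ T then ((pq 1 x * pq 2 x : ℕ) : ℝ) else 0) *
          (if ((pq 2 x * pq 3 x : ℕ) : ℝ) ≤ T then ((pq 2 x * pq 3 x : ℕ) : ℝ) else 0)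
          ∂gaussMeasure) ≤ C * T := by
  have hlog : 0 < Real.log 2 := Real.log_pos one_lt_two
  refine ⟨32 / Real.log 2, by positivity, ?_⟩
  intro T hT
  have hT0 : (0:ℝ) < T := by linarith
  set F : ℝ → ℝ := fun x => corrVal T (pq 1 x * pq 2 x) * corrVal T (pq 2 x * pq 3 x) with hF
  have hFeq : (fun x =>
      (if ((pq 1 x * pq 2 x : ℕ) : ℝ) ≤ T then ((pq 1 x * pq 2 x : ℕ) : ℝ) else 0) *
      (if ((pq 2 x * pq 3 x : ℕ) : ℝ) ≤ T then ((pq 2 x * pq 3 x : ℕ) : ℝ) else 0)) = F := rfl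
  have hFnn : ∀ x, 0 ≤ F x := fun x =>
    mul_nonneg (corrVal_nonneg _ _) (corrVal_nonneg _ _)
  have hFmeas : Measurable F := by
    have hv : Measurable (corrVal T) := measurable_from_top
    exact (hv.comp ((corr_measurable_pq 1).mul (corr_measurable_pq 2))).mul
      (hv.comp ((corr_measurable_pq 2).mul (corr_measurable_pq 3)))
  -- cylinder sets
  set Δ : ℕ × ℕ × ℕ → Set ℝ :=
    fun p => {x | pq 1 x = p.2.1 ∧ pq 2 x = p.1 ∧ pq 3 x = p.2.2} with hΔ
  have hΔmeas : ∀ p, MeasurableSet (Δ p) := by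
    intro p
    have h1 : Δ p = (fun x => pq 1 x) ⁻¹' {p.2.1} ∩
        ((fun x => pq 2 x) ⁻¹' {p.1} ∩ (fun x => pq 3 x) ⁻¹' {p.2.2}) := by
      ext x; simp [hΔ, and_assoc]
    rw [h1]
    exact ((corr_measurable_pq 1) (measurableSet_singleton _)).inter
      (((corr_measurable_pq 2) (measurableSet_singleton _)).inter
        ((corr_measurable_pq 3) (measurableSet_singleton _)))
  set g : ℕ × ℕ × ℕ → ℝ≥0∞ :=
    fun p => ENNReal.ofReal (corrVal T (p.2.1 * p.1)) *
      ENNReal.ofReal (corrVal T (p.1 * p.2.2)) with hg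
  -- pointwise domination
  have hpoint : ∀ x, ENNReal.ofReal (F x)
      ≤ ∑' p : ℕ × ℕ × ℕ, (Δ p).indicator (fun _ => g p) x := by
    intro x
    have hx : x ∈ Δ (pq 2 x, pq 1 x, pq 3 x) := ⟨rfl, rfl, rfl⟩
    have h1 : (Δ (pq 2 x, pq 1 x, pq 3 x)).indicator
        (fun _ => g (pq 2 x, pq 1 x, pq 3 x)) x = ENNReal.ofReal (F x) := by
      rw [Set.indicator_of_mem hx, hg, hF]
      simp only
      rw [← ENNReal.ofReal_mul (corrVal_nonneg _ _)]
    rw [← h1]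
    exact ENNReal.le_tsum _
  -- lintegral bound over (0,1)
  have hlin : ∫⁻ x in Ioo (0:ℝ) 1, ENNReal.ofReal (F x)
      ≤ ENNReal.ofReal (32 * T) := by
    have h1 : ∫⁻ x in Ioo (0:ℝ) 1, ENNReal.ofReal (F x)
        ≤ ∫⁻ x in Ioo (0:ℝ) 1, ∑' p : ℕ × ℕ × ℕ, (Δ p).indicator (fun _ => g p) x :=
      lintegral_mono hpoint
    have h2 : ∫⁻ x in Ioo (0:ℝ) 1, ∑' p : ℕ × ℕ × ℕ, (Δ p).indicator (fun _ => g p) x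
        = ∑' p : ℕ × ℕ × ℕ, ∫⁻ x in Ioo (0:ℝ) 1, (Δ p).indicator (fun _ => g p) x :=
      lintegral_tsum (fun p => (measurable_const.indicator (hΔmeas p)).aemeasurable)
    have h3 : ∀ p : ℕ × ℕ × ℕ, ∫⁻ x in Ioo (0:ℝ) 1, (Δ p).indicator (fun _ => g p) x
        = g p * volume (Δ p ∩ Ioo 0 1) := by
      intro p
      rw [lintegral_indicator (hΔmeas p), setLIntegral_const,
        Measure.restrict_apply (hΔmeas p)]
    have h4 : ∀ p : ℕ × ℕ × ℕ, g p * volume (Δ p ∩ Ioo 0 1)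
        ≤ corrF1 T p.2.1 p.1 * corrF1 T p.2.2 p.1 := by
      rintro ⟨b, a, c⟩
      simp only [hg, hΔ]
      by_cases hab : corrVal T (a * b) = 0
      · simp [hab]
      by_cases hbc : corrVal T (b * c) = 0
      · simp [hbc]
      have hab1 : 1 ≤ a * b := corrVal_ne_zero hab
      have hbc1 : 1 ≤ b * c := corrVal_ne_zero hbc
      have ha1 : 1 ≤ a := Nat.one_le_iff_ne_zero.mpr (by rintro rfl; simp at hab1)
      have hb1 : 1 ≤ b := Nat.one_le_iff_ne_zero.mpr (by rintro rfl; simp at hab1)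
      have hc1 : 1 ≤ c := Nat.one_le_iff_ne_zero.mpr (by rintro rfl; simp at hbc1)
      have hvol := corr_cyl a b c ha1 hb1 hc1
      have hR : corrF1 T a b * corrF1 T c b
          = ENNReal.ofReal (corrVal T (a*b)) * ENNReal.ofReal (corrVal T (b*c)) *
            (((a:ℝ≥0∞))⁻¹ ^ 2 * ((b:ℝ≥0∞))⁻¹ ^ 2 * ((c:ℝ≥0∞))⁻¹ ^ 2) := by
        unfold corrF1
        rw [Nat.mul_comm c b]
        ring
      rw [hR]
      exact mul_le_mul_right hvol _
    calc ∫⁻ x in Ioo (0:ℝ) 1, ENNReal.ofReal (F x)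
        ≤ ∑' p : ℕ × ℕ × ℕ, ∫⁻ x in Ioo (0:ℝ) 1, (Δ p).indicator (fun _ => g p) x :=
          h1.trans (le_of_eq h2)
      _ ≤ ∑' p : ℕ × ℕ × ℕ, corrF1 T p.2.1 p.1 * corrF1 T p.2.2 p.1 := by
          refine ENNReal.tsum_le_tsum (fun p => ?_)
          rw [h3 p]; exact h4 p
      _ ≤ ENNReal.ofReal (32 * T) := corr_outer T hT
  -- from gaussMeasure to restricted Lebesgue
  have hdmeas : Measurable fun x : ℝ => ENNReal.ofReal (1 / (Real.log 2 * (1 + x))) := by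
    apply ENNReal.measurable_ofReal.comp
    exact measurable_const.div (measurable_const.mul (measurable_const.add measurable_id))
  have hGmeas : Measurable fun x => ENNReal.ofReal (F x) :=
    ENNReal.measurable_ofReal.comp hFmeas
  have hgauss : ∫⁻ x, ENNReal.ofReal (F x) ∂gaussMeasure
      ≤ ENNReal.ofReal ((Real.log 2)⁻¹) * ENNReal.ofReal (32 * T) := by
    rw [gaussMeasure, lintegral_withDensity_eq_lintegral_mul _ hdmeas hGmeas]
    have hb1 : ∫⁻ x in Ioo (0:ℝ) 1,
        ENNReal.ofReal (1 / (Real.log 2 * (1 + x))) * ENNReal.ofReal (F x)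
        ≤ ∫⁻ x in Ioo (0:ℝ) 1, ENNReal.ofReal ((Real.log 2)⁻¹) * ENNReal.ofReal (F x) := by
      apply lintegral_mono_ae
      filter_upwards [ae_restrict_mem measurableSet_Ioo] with x hx
      apply mul_le_mul_left
      apply ENNReal.ofReal_le_ofReal
      rw [one_div]
      apply inv_anti₀ hlog
      nlinarith [hx.1]
    refine le_trans hb1 ?_
    rw [lintegral_const_mul _ hGmeas]
    exact mul_le_mul_right hlin _
  -- conclude
  rw [hFeq]
  have hint : ∫ x, F x ∂gaussMeasure
      = ENNReal.toReal (∫⁻ x, ENNReal.ofReal (F x) ∂gaussMeasure) := by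
    apply integral_eq_lintegral_of_nonneg_ae
    · exact Filter.Eventually.of_forall hFnn
    · exact hFmeas.aestronglyMeasurable
  rw [hint]
  have hfin : ENNReal.ofReal ((Real.log 2)⁻¹) * ENNReal.ofReal (32 * T)
      = ENNReal.ofReal (32 / Real.log 2 * T) := by
    rw [← ENNReal.ofReal_mul (by positivity)]
    congr 1
    field_simp
  apply ENNReal.toReal_le_of_le_ofReal (by positivity)
  rw [← hfin]
  exact hgauss
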